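/- The total variation distance between the post-removal distribution and the original distribution decomposes exactly as TV(P_R, P) = |1/A − 1|·Σ_{t∈R̂∩R} P(t) + |e^{δ−δ̂}/A − 1|·Σ_{t∈Ĝ∩G} P(t) + |e^{δ}/A − 1|·Σ_{t∈R̂∩G} P(t) + |e^{−δ̂}/A − 1|·Σ_{t∈Ĝ∩R} P(t). -/
import Mathlib


open Finset

/-- Exact decomposition of the total variation distance between the
post-removal distribution and the original distribution. -/
theorem tv_decomposition
    {V : Type*} [Fintype V] [DecidableEq V]
    (P : V → ℝ) (G Ghat : Finset V) (δ δhat : ℝ)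
    (hP0 : ∀ t, 0 ≤ P t) (hP1 : ∑ t, P t = 1) (hδ : 0 < δ) (hδhat : 0 < δhat)
    (Z Zhat A : ℝ) (PW PR : V → ℝ)
    (hZ : Z = ∑ t ∈ Gᶜ, P t + Real.exp δ * ∑ t ∈ G, P t)
    (hPW : ∀ t, PW t = Real.exp (δ * (if t ∈ G then 1 else 0)) * P t / Z)
    (hZhat : Zhat = ∑ t ∈ Ghatᶜ, PW t + Real.exp (-δhat) * ∑ t ∈ Ghat, PW t)
    (hPR : ∀ t, PR t = Real.exp (-(δhat * (if t ∈ Ghat then 1 else 0))) * PW t / Zhat)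
    (hA : A = ∑ t ∈ Ghatᶜ ∩ Gᶜ, P t + Real.exp δ * ∑ t ∈ Ghatᶜ ∩ G, P t
        + Real.exp (-δhat) * ∑ t ∈ Ghat ∩ Gᶜ, P t
        + Real.exp (δ - δhat) * ∑ t ∈ Ghat ∩ G, P t) :
    ∑ t, |PR t - P t|
      = |1 / A - 1| * ∑ t ∈ Ghatᶜ ∩ Gᶜ, P t
        + |Real.exp (δ - δhat) / A - 1| * ∑ t ∈ Ghat ∩ G, P t
        + |Real.exp δ / A - 1| * ∑ t ∈ Ghatᶜ ∩ G, P t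
        + |Real.exp (-δhat) / A - 1| * ∑ t ∈ Ghat ∩ Gᶜ, P t := by
  have hZpos : 0 < Z := by
    have hG : 0 ≤ ∑ t ∈ G, P t := Finset.sum_nonneg fun t _ => hP0 t
    have h1 : ∑ t ∈ G, P t + ∑ t ∈ Gᶜ, P t = 1 := by
      rw [Finset.sum_add_sum_compl, hP1]
    have he : 1 ≤ Real.exp δ := Real.one_le_exp hδ.le
    nlinarith
  have hZ0 : Z ≠ 0 := hZpos.ne'
  have hsplit : ∀ (s : Finset V) (f : V → ℝ),
      ∑ t ∈ s, f t = ∑ t ∈ s ∩ G, f t + ∑ t ∈ s ∩ Gᶜ, f t := by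
    intro s f
    rw [← Finset.sum_inter_add_sum_sdiff s G f]
    congr 1
    apply Finset.sum_congr _ fun _ _ => rfl
    ext x
    simp [Finset.mem_sdiff]
  have hZPW : ∀ s : Finset V, Z * ∑ t ∈ s, PW t
      = Real.exp δ * ∑ t ∈ s ∩ G, P t + ∑ t ∈ s ∩ Gᶜ, P t := by
    intro s
    rw [Finset.mul_sum]
    have h1 : ∀ t ∈ s, Z * PW t = (if t ∈ G then Real.exp δ else 1) * P t := by
      intro t _
      rw [hPW t, mul_comm, div_mul_cancel₀ _ hZ0]
      by_cases ht : t ∈ G <;> simp [ht]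
    rw [Finset.sum_congr rfl h1, hsplit s]
    congr 1
    · rw [Finset.mul_sum]
      refine Finset.sum_congr rfl fun t ht => ?_
      simp [(Finset.mem_inter.mp ht).2]
    · refine Finset.sum_congr rfl fun t ht => ?_
      have := Finset.mem_compl.mp (Finset.mem_inter.mp ht).2
      simp [this]
  have hAZ : A = Z * Zhat := by
    rw [hZhat, mul_add, ← mul_assoc, mul_comm Z (Real.exp (-δhat)), mul_assoc,
      hZPW, hZPW, hA, Real.exp_sub, Real.exp_neg]
    have h := Real.exp_pos δhat
    field_simp
    ring
  set c : V → ℝ := fun t =>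
    Real.exp (-(δhat * (if t ∈ Ghat then 1 else 0)))
      * Real.exp (δ * (if t ∈ G then 1 else 0)) with hc
  have habs : ∀ t, |PR t - P t| = |c t / A - 1| * P t := by
    intro t
    rw [hPR t, hPW t, hAZ, hc]
    have hid : Real.exp (-(δhat * (if t ∈ Ghat then 1 else 0)))
        * (Real.exp (δ * (if t ∈ G then 1 else 0)) * P t / Z) / Zhat - P t
        = (Real.exp (-(δhat * (if t ∈ Ghat then 1 else 0)))
            * Real.exp (δ * (if t ∈ G then 1 else 0)) / (Z * Zhat) - 1) * P t := by
      ring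
    rw [hid, abs_mul, abs_of_nonneg (hP0 t)]
  have cell : ∀ (s : Finset V) (e : ℝ), (∀ t ∈ s, c t = e) →
      ∑ t ∈ s, |c t / A - 1| * P t = |e / A - 1| * ∑ t ∈ s, P t := by
    intro s e h
    rw [Finset.mul_sum]
    exact Finset.sum_congr rfl fun t ht => by rw [h t ht]
  calc ∑ t, |PR t - P t|
      = ∑ t, |c t / A - 1| * P t := Finset.sum_congr rfl fun t _ => habs t
    _ = ∑ t ∈ Ghat, |c t / A - 1| * P t + ∑ t ∈ Ghatᶜ, |c t / A - 1| * P t :=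
        (Finset.sum_add_sum_compl Ghat _).symm
    _ = (∑ t ∈ Ghat ∩ G, |c t / A - 1| * P t + ∑ t ∈ Ghat ∩ Gᶜ, |c t / A - 1| * P t)
        + (∑ t ∈ Ghatᶜ ∩ G, |c t / A - 1| * P t
          + ∑ t ∈ Ghatᶜ ∩ Gᶜ, |c t / A - 1| * P t) := by
        rw [hsplit Ghat, hsplit Ghatᶜ]
    _ = _ := by
        have e1 : ∑ t ∈ Ghat ∩ G, |c t / A - 1| * P t
            = |Real.exp (δ - δhat) / A - 1| * ∑ t ∈ Ghat ∩ G, P t := by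
          refine cell _ _ fun t ht => ?_
          have h1 := (Finset.mem_inter.mp ht).1
          have h2 := (Finset.mem_inter.mp ht).2
          simp only [hc, h1, h2, if_pos, mul_one, ← Real.exp_add]
          congr 1; ring
        have e2 : ∑ t ∈ Ghat ∩ Gᶜ, |c t / A - 1| * P t
            = |Real.exp (-δhat) / A - 1| * ∑ t ∈ Ghat ∩ Gᶜ, P t := by
          refine cell _ _ fun t ht => ?_
          have h1 := (Finset.mem_inter.mp ht).1
          have h2 := Finset.mem_compl.mp (Finset.mem_inter.mp ht).2
          simp [hc, h1, h2]
        have e3 : ∑ t ∈ Ghatᶜ ∩ G, |c t / A - 1| * P t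
            = |Real.exp δ / A - 1| * ∑ t ∈ Ghatᶜ ∩ G, P t := by
          refine cell _ _ fun t ht => ?_
          have h1 := Finset.mem_compl.mp (Finset.mem_inter.mp ht).1
          have h2 := (Finset.mem_inter.mp ht).2
          simp [hc, h1, h2]
        have e4 : ∑ t ∈ Ghatᶜ ∩ Gᶜ, |c t / A - 1| * P t
            = |1 / A - 1| * ∑ t ∈ Ghatᶜ ∩ Gᶜ, P t := by
          refine cell _ _ fun t ht => ?_
          have h1 := Finset.mem_compl.mp (Finset.mem_inter.mp ht).1
          have h2 := Finset.mem_compl.mp (Finset.mem_inter.mp ht).2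
          simp [hc, h1, h2]
        rw [e1, e2, e3, e4]
        ring
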